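/- Fix n ≥ 2 and let H be the matrix indexed by bit strings x, y ∈ {0,1}^n with entries: H_{x,x} = (1/2)(n − Σ_{k=1}^{n−1} (−1)^{x_k + x_{k+1}}), H_{x,x̄} = −1/2 for every x (where x̄ is the bitwise negation of x), and all other entries zero. (This is the GHZ parent Hamiltonian H = (1/2)(n𝟙 − Σ_{k=1}^{n−1} Z_k Z_{k+1} − X^{⊗n}).) Then H is positive semidefinite and its kernel equals the one-dimensional subspace ℂ·(e_{0^n} + e_{1^n}); in particular the n-qubit GHZ state |0^n⟩ + |1^n⟩ (up to normalization) is the unique ground state of H. -/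

import Mathlib

open Matrix ComplexOrder

/-- Bitwise negation of a bit string. -/
def bnot' {n : ℕ} (x : Fin n → Fin 2) : Fin n → Fin 2 := fun l => 1 - x l

/-- The GHZ parent Hamiltonian H = (1/2)(n𝟙 − Σ_{k=1}^{n−1} Z_k Z_{k+1} − X^{⊗n}),
as a matrix indexed by bit strings: diagonal entries
H_{x,x} = (1/2)(n − Σ_{k=1}^{n−1} (−1)^{x_k + x_{k+1}}), anti-diagonal entries
H_{x,x̄} = −1/2, all other entries zero. -/
noncomputable def ghzParent (n : ℕ) (hn : 2 ≤ n) :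
    Matrix (Fin n → Fin 2) (Fin n → Fin 2) ℂ :=
  Matrix.of fun x y =>
    if y = x then
      (1 / 2 : ℂ) * ((n : ℂ) - ∑ k ∈ (Finset.range (n - 1)).attach,
        (-1 : ℂ) ^
          ((x ⟨k.1, by have := Finset.mem_range.mp k.2; omega⟩ : ℕ) +
           (x ⟨k.1 + 1, by have := Finset.mem_range.mp k.2; omega⟩ : ℕ)))
    else if y = bnot' x then -(1 / 2 : ℂ) else 0

lemma bnot'_invol {n : ℕ} : Function.Involutive (bnot' (n := n)) := by
  have h : ∀ a : Fin 2, 1 - (1 - a) = a := by decide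
  intro x; funext l; exact h (x l)

lemma bnot'_ne {n : ℕ} (hn : 0 < n) (x : Fin n → Fin 2) : bnot' x ≠ x := by
  have h : ∀ a : Fin 2, 1 - a ≠ a := by decide
  intro hc; exact h (x ⟨0, hn⟩) (congrFun hc ⟨0, hn⟩)

/-- Integer version of the ZZ-correlation sum. -/
def ghzE (n : ℕ) (x : Fin n → Fin 2) : ℤ :=
  ∑ k ∈ (Finset.range (n - 1)).attach,
    (-1 : ℤ) ^
      ((x ⟨k.1, by have := Finset.mem_range.mp k.2; omega⟩ : ℕ) +
       (x ⟨k.1 + 1, by have := Finset.mem_range.mp k.2; omega⟩ : ℕ))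

lemma ghzE_bnot {n : ℕ} (x : Fin n → Fin 2) : ghzE n (bnot' x) = ghzE n x := by
  have h : ∀ a b : Fin 2, (-1 : ℤ) ^ (((1 - a : Fin 2) : ℕ) + ((1 - b : Fin 2) : ℕ))
      = (-1 : ℤ) ^ ((a : ℕ) + (b : ℕ)) := by decide
  unfold ghzE
  exact Finset.sum_congr rfl fun k _ => h _ _

lemma ghzE_le {n : ℕ} (hn : 2 ≤ n) (x : Fin n → Fin 2) : ghzE n x ≤ (n : ℤ) - 1 := by
  have h1 : ghzE n x ≤ ∑ k ∈ (Finset.range (n - 1)).attach, (1 : ℤ) := by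
    unfold ghzE
    apply Finset.sum_le_sum
    intro i _
    rcases Nat.even_or_odd ((x ⟨i.1, by have := Finset.mem_range.mp i.2; omega⟩ : ℕ) +
        (x ⟨i.1 + 1, by have := Finset.mem_range.mp i.2; omega⟩ : ℕ)) with he | ho
    · rw [he.neg_one_pow]
    · rw [ho.neg_one_pow]; norm_num
  rw [Finset.sum_const, Finset.card_attach, Finset.card_range, nsmul_eq_mul, mul_one] at h1
  omega

lemma ghzE_const {n : ℕ} (hn : 2 ≤ n) (b : Fin 2) :
    ghzE n (fun _ => b) = (n : ℤ) - 1 := by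
  unfold ghzE
  have h : ∀ a : Fin 2, (-1 : ℤ) ^ ((a : ℕ) + (a : ℕ)) = 1 := by decide
  rw [Finset.sum_congr rfl fun k _ => h b, Finset.sum_const, Finset.card_attach,
    Finset.card_range, nsmul_eq_mul, mul_one]
  omega

lemma ghzE_eq_const {n : ℕ} (hn : 2 ≤ n) (x : Fin n → Fin 2)
    (hx : ghzE n x = (n : ℤ) - 1) :
    x = (fun _ => 0) ∨ x = (fun _ => 1) := by
  have hstep : ∀ k : ℕ, ∀ hk : k < n - 1,
      x ⟨k, by omega⟩ = x ⟨k + 1, by omega⟩ := by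
    by_contra hc
    push_neg at hc
    obtain ⟨k, hk, hne⟩ := hc
    have hterm : ∀ a b : Fin 2, a ≠ b → (-1 : ℤ) ^ ((a : ℕ) + (b : ℕ)) = -1 := by decide
    have hlt : ghzE n x < ∑ k ∈ (Finset.range (n - 1)).attach, (1 : ℤ) := by
      unfold ghzE
      apply Finset.sum_lt_sum
      · intro i _
        rcases Nat.even_or_odd ((x ⟨i.1, by have := Finset.mem_range.mp i.2; omega⟩ : ℕ) +
            (x ⟨i.1 + 1, by have := Finset.mem_range.mp i.2; omega⟩ : ℕ)) with he | ho
        · rw [he.neg_one_pow]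
        · rw [ho.neg_one_pow]; norm_num
      · refine ⟨⟨k, Finset.mem_range.mpr hk⟩, Finset.mem_attach _ _, ?_⟩
        rw [hterm _ _ hne]; norm_num
    rw [Finset.sum_const, Finset.card_attach, Finset.card_range, nsmul_eq_mul, mul_one] at hlt
    omega
  have hall : ∀ i : ℕ, ∀ hi : i < n, x ⟨i, hi⟩ = x ⟨0, by omega⟩ := by
    intro i
    induction i with
    | zero => intro hi; rfl
    | succ j ih =>
      intro hi
      have hj : j < n - 1 := by omega
      rw [← hstep j hj]
      exact ih (by omega)
  have h2 : ∀ a : Fin 2, a = 0 ∨ a = 1 := by decide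
  rcases h2 (x ⟨0, by omega⟩) with h0 | h0
  · left; funext i; rw [show i = ⟨i.1, i.2⟩ from rfl, hall i.1 i.2, h0]
  · right; funext i; rw [show i = ⟨i.1, i.2⟩ from rfl, hall i.1 i.2, h0]

lemma ghz_diag (n : ℕ) (hn : 2 ≤ n) (x : Fin n → Fin 2) :
    ghzParent n hn x x = (1 / 2 : ℂ) * ((n : ℂ) - (ghzE n x : ℂ)) := by
  unfold ghzParent ghzE
  rw [Matrix.of_apply, if_pos rfl]
  push_cast
  rfl

lemma ghz_anti (n : ℕ) (hn : 2 ≤ n) (x : Fin n → Fin 2) :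
    ghzParent n hn x (bnot' x) = -(1 / 2 : ℂ) := by
  unfold ghzParent
  rw [Matrix.of_apply, if_neg (bnot'_ne (by omega) x), if_pos rfl]

lemma ghz_off (n : ℕ) (hn : 2 ≤ n) (x y : Fin n → Fin 2) (h1 : y ≠ x) (h2 : y ≠ bnot' x) :
    ghzParent n hn x y = 0 := by
  unfold ghzParent
  rw [Matrix.of_apply, if_neg h1, if_neg h2]

lemma ghz_mulVec (n : ℕ) (hn : 2 ≤ n) (v : (Fin n → Fin 2) → ℂ) (x : Fin n → Fin 2) :
    (ghzParent n hn).mulVec v x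
      = (1 / 2 : ℂ) * ((n : ℂ) - (ghzE n x : ℂ)) * v x - (1 / 2 : ℂ) * v (bnot' x) := by
  have hne : bnot' x ≠ x := bnot'_ne (by omega) x
  have hentry : ∀ y, ghzParent n hn x y * v y
      = (if y = x then (1 / 2 : ℂ) * ((n : ℂ) - (ghzE n x : ℂ)) * v y else 0)
        + (if y = bnot' x then -(1 / 2 : ℂ) * v y else 0) := by
    intro y
    by_cases h1 : y = x
    · subst h1
      rw [if_pos rfl, if_neg (Ne.symm hne), ghz_diag, add_zero]
    · by_cases h2 : y = bnot' x
      · subst h2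
        rw [if_neg h1, if_pos rfl, ghz_anti, zero_add]
      · rw [if_neg h1, if_neg h2, ghz_off n hn x y h1 h2, zero_mul, add_zero]
  rw [Matrix.mulVec, dotProduct]
  rw [Finset.sum_congr rfl fun y _ => hentry y, Finset.sum_add_distrib,
    Finset.sum_ite_eq' Finset.univ x, Finset.sum_ite_eq' Finset.univ (bnot' x)]
  simp [sub_eq_add_neg]

lemma ghz_herm (n : ℕ) (hn : 2 ≤ n) : (ghzParent n hn).IsHermitian := by
  ext x y
  rw [Matrix.conjTranspose_apply]
  by_cases h1 : x = y
  · subst h1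
    rw [ghz_diag]
    simp [_root_.map_mul, map_sub, map_div₀]
  · by_cases h2 : y = bnot' x
    · have h3 : x = bnot' y := by rw [h2, bnot'_invol]
      have e1 : ghzParent n hn y x = -(1 / 2 : ℂ) := by rw [h3]; exact ghz_anti n hn y
      have e2 : ghzParent n hn x y = -(1 / 2 : ℂ) := by rw [h2]; exact ghz_anti n hn x
      rw [e1, e2]
      simp
    · have h4 : x ≠ bnot' y := fun hc => h2 (by rw [hc, bnot'_invol])
      rw [ghz_off n hn y x h1 h4, ghz_off n hn x y (fun hc => h1 hc.symm) h2]
      simp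

lemma ghz_psd (n : ℕ) (hn : 2 ≤ n) : (ghzParent n hn).PosSemidef := by
  refine Matrix.posSemidef_iff_dotProduct_mulVec.mpr ⟨ghz_herm n hn, fun v => ?_⟩
  have hform : star v ⬝ᵥ (ghzParent n hn).mulVec v
      = ∑ x : Fin n → Fin 2,
          (((((n : ℤ) - ghzE n x - 1 : ℤ) : ℝ) / 2 * Complex.normSq (v x)
            + (1 / 4 : ℝ) * Complex.normSq (v x - v (bnot' x)) : ℝ) : ℂ) := by
    rw [dotProduct]
    have hterm : ∀ x : Fin n → Fin 2,
        star v x * (ghzParent n hn).mulVec v x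
          - (((((n : ℤ) - ghzE n x - 1 : ℤ) : ℝ) / 2 * Complex.normSq (v x)
            + (1 / 4 : ℝ) * Complex.normSq (v x - v (bnot' x)) : ℝ) : ℂ)
        = (1 / 4 : ℂ) * ((v x * (starRingEnd ℂ) (v (bnot' x)) + (Complex.normSq (v x) : ℂ))
          - (v (bnot' x) * (starRingEnd ℂ) (v (bnot' (bnot' x)))
            + (Complex.normSq (v (bnot' x)) : ℂ))) := by
      intro x
      rw [ghz_mulVec, bnot'_invol x]
      rw [Pi.star_apply, Complex.star_def]
      push_cast
      rw [← Complex.mul_conj, ← Complex.mul_conj, ← Complex.mul_conj, map_sub]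
      ring
    rw [← sub_eq_zero, ← Finset.sum_sub_distrib,
      Finset.sum_congr rfl fun x _ => hterm x, ← Finset.mul_sum,
      Finset.sum_sub_distrib,
      Fintype.sum_bijective bnot' bnot'_invol.bijective _
        (fun y => v y * (starRingEnd ℂ) (v (bnot' y)) + (Complex.normSq (v y) : ℂ))
        (fun x => rfl),
      sub_self, mul_zero]
  rw [hform]
  apply Finset.sum_nonneg
  intro x _
  rw [Complex.zero_le_real]
  have h1 : (0 : ℤ) ≤ (n : ℤ) - ghzE n x - 1 := by have := ghzE_le hn x; omega
  have h2 : (0 : ℝ) ≤ Complex.normSq (v x) := Complex.normSq_nonneg _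
  have h3 : (0 : ℝ) ≤ Complex.normSq (v x - v (bnot' x)) := Complex.normSq_nonneg _
  have h4 : (0 : ℝ) ≤ (((n : ℤ) - ghzE n x - 1 : ℤ) : ℝ) := by exact_mod_cast h1
  positivity

lemma bnot'_zero {n : ℕ} : bnot' (fun _ => (0 : Fin 2)) = (fun _ => (1 : Fin 2) : Fin n → Fin 2) := by
  funext l; simp [bnot']

lemma bnot'_one {n : ℕ} : bnot' (fun _ => (1 : Fin 2)) = (fun _ => (0 : Fin 2) : Fin n → Fin 2) := by
  funext l; simp [bnot']

lemma ghz_zero_ne_one {n : ℕ} (hn : 2 ≤ n) :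
    (fun _ => (0 : Fin 2) : Fin n → Fin 2) ≠ (fun _ => (1 : Fin 2)) := by
  intro hc
  have := congrFun hc ⟨0, by omega⟩
  exact absurd this (by decide)

/-- The GHZ parent Hamiltonian is positive semidefinite and its kernel
is the one-dimensional subspace spanned by e_{0^n} + e_{1^n}: the GHZ state is its
unique ground state. -/
theorem ghz_parent_hamiltonian (n : ℕ) (hn : 2 ≤ n) :
    (ghzParent n hn).PosSemidef ∧
    {v : (Fin n → Fin 2) → ℂ | (ghzParent n hn).mulVec v = 0} =
      {v : (Fin n → Fin 2) → ℂ |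
        ∃ c : ℂ, v = c • (Pi.single (fun _ => 0) 1 + Pi.single (fun _ => 1) 1)} := by
  refine ⟨ghz_psd n hn, ?_⟩
  ext v
  simp only [Set.mem_setOf_eq]
  constructor
  · intro h
    have heq : ∀ x, (1 / 2 : ℂ) * ((n : ℂ) - (ghzE n x : ℂ)) * v x
        - (1 / 2 : ℂ) * v (bnot' x) = 0 := by
      intro x
      have := congrFun h x
      rwa [ghz_mulVec, Pi.zero_apply] at this
    have hzero : ∀ x, x ≠ (fun _ => 0) → x ≠ (fun _ => 1) → v x = 0 := by
      intro x hx0 hx1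
      have hne : ghzE n x ≠ (n : ℤ) - 1 := by
        intro hc
        rcases ghzE_eq_const hn x hc with h0 | h0
        · exact hx0 h0
        · exact hx1 h0
      have hle : ghzE n x ≤ (n : ℤ) - 2 := by have := ghzE_le hn x; omega
      have e1 := heq x
      have e2 := heq (bnot' x)
      rw [bnot'_invol x, ghzE_bnot] at e2
      -- from e1: v (bnot' x) = ((n:ℂ) - ghzE) * v x
      have hvb : v (bnot' x) = ((n : ℂ) - (ghzE n x : ℂ)) * v x := by
        linear_combination -2 * e1
      rw [hvb] at e2
      have e3 : (((n : ℂ) - (ghzE n x : ℂ)) ^ 2 - 1) * v x = 0 := by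
        linear_combination 2 * e2
      have hM : ((n : ℂ) - (ghzE n x : ℂ)) ^ 2 - 1 ≠ 0 := by
        have hint : (((n : ℤ) - ghzE n x) ^ 2 - 1 : ℤ) ≠ 0 := by nlinarith
        have : ((((n : ℤ) - ghzE n x) ^ 2 - 1 : ℤ) : ℂ) ≠ 0 := by
          exact_mod_cast hint
        push_cast at this
        convert this using 2
      exact (mul_eq_zero.mp e3).resolve_left hM
    have e0 := heq (fun _ => 0)
    rw [bnot'_zero, ghzE_const hn 0] at e0
    have hcast : ((((n : ℤ) - 1 : ℤ)) : ℂ) = (n : ℂ) - 1 := by push_cast; ring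
    rw [hcast] at e0
    have hv01 : v (fun _ => 1) = v (fun _ => 0) := by linear_combination -2 * e0
    refine ⟨v (fun _ => 0), ?_⟩
    funext x
    simp only [Pi.smul_apply, Pi.add_apply, smul_eq_mul, Pi.single_apply]
    by_cases h0 : x = (fun _ => 0)
    · subst h0
      simp [ghz_zero_ne_one hn]
    · by_cases h1 : x = (fun _ => 1)
      · subst h1
        simp [(ghz_zero_ne_one hn).symm, hv01]
      · simp [h0, h1, hzero x h0 h1]
  · rintro ⟨c, hc⟩
    subst hc
    funext x
    rw [ghz_mulVec]
    simp only [Pi.smul_apply, Pi.add_apply, smul_eq_mul, Pi.single_apply, Pi.zero_apply]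
    by_cases h0 : x = (fun _ => 0)
    · subst h0
      rw [bnot'_zero, ghzE_const hn 0]
      simp only [if_pos rfl, if_neg (ghz_zero_ne_one hn), if_neg (Ne.symm (ghz_zero_ne_one hn))]
      push_cast
      ring
    · by_cases h1 : x = (fun _ => 1)
      · subst h1
        rw [bnot'_one, ghzE_const hn 1]
        simp only [if_pos rfl, if_neg (ghz_zero_ne_one hn), if_neg (Ne.symm (ghz_zero_ne_one hn))]
        push_cast
        ring
      · have hb0 : bnot' x ≠ (fun _ => 0) := fun hcc => h1 (by
          rw [← bnot'_invol x, hcc, bnot'_zero])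
        have hb1 : bnot' x ≠ (fun _ => 1) := fun hcc => h0 (by
          rw [← bnot'_invol x, hcc, bnot'_one])
        simp [h0, h1, hb0, hb1]
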